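/- The image of ℚ^n under r equals ℚ^n ∩ C; in particular, if every coordinate of x ∈ ℝ^n is rational, then every coordinate of r(x) is rational. -/

import Mathlib

/-- The dominant cone `C = {x ∈ ℝⁿ : x₁ ≥ x₂ ≥ ⋯ ≥ xₙ}`. -/
def domCone (n : ℕ) : Set (EuclideanSpace ℝ (Fin n)) :=
  {x | ∀ i j : Fin n, i ≤ j → x j ≤ x i}

/-- `r` is the map sending each point of `ℝⁿ` to the (unique) closest point
of the dominant cone. -/
def IsClosestPointMap (n : ℕ)
    (r : EuclideanSpace ℝ (Fin n) → EuclideanSpace ℝ (Fin n)) : Prop :=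
  ∀ x, r x ∈ domCone n ∧ ∀ c ∈ domCone n, dist x (r x) ≤ dist x c

open Finset in
lemma key (n : ℕ) (x y : EuclideanSpace ℝ (Fin n)) (hy : y ∈ domCone n)
    (hmin : ∀ c ∈ domCone n, dist x y ≤ dist x c)
    (hx : ∀ i, ∃ q : ℚ, x i = (q : ℝ)) :
    ∀ i, ∃ q : ℚ, y i = (q : ℝ) := by
  intro i
  classical
  set B : Finset (Fin n) := Finset.univ.filter (fun j => y j = y i) with hB
  have hiB : i ∈ B := by simp [hB]
  set v : EuclideanSpace ℝ (Fin n) := WithLp.toLp 2 (fun j => if y j = y i then (1:ℝ) else 0) with hv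
  have hne : (Finset.univ ×ˢ Finset.univ : Finset (Fin n × Fin n)).Nonempty :=
    ⟨(i,i), by simp⟩
  set δ : ℝ := (Finset.univ ×ˢ Finset.univ : Finset (Fin n × Fin n)).inf' hne
      (fun p => if y p.1 = y p.2 then 1 else |y p.1 - y p.2|) with hδ
  have hδpos : 0 < δ := by
    rw [hδ, Finset.lt_inf'_iff]
    intro p _
    by_cases h : y p.1 = y p.2
    · simp [h]
    · rw [if_neg h]; exact abs_pos.mpr (sub_ne_zero.mpr h)
  have hδle : ∀ j k : Fin n, y j ≠ y k → δ ≤ |y j - y k| := by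
    intro j k h
    have := Finset.inf'_le (fun p : Fin n × Fin n =>
      if y p.1 = y p.2 then 1 else |y p.1 - y p.2|) (show (j,k) ∈ Finset.univ ×ˢ Finset.univ by simp)
    simpa [h, hδ] using this
  -- membership of perturbations
  have hmem : ∀ t : ℝ, |t| ≤ δ/2 → (y + t • v) ∈ domCone n := by
    intro t ht j k hjk
    obtain ⟨ht1, ht2⟩ := abs_le.mp ht
    have hyy : y k ≤ y j := hy j k hjk
    show (y + t • v) k ≤ (y + t • v) j
    have hj : (y + t • v) j = y j + t * (if y j = y i then (1:ℝ) else 0) := rfl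
    have hk : (y + t • v) k = y k + t * (if y k = y i then (1:ℝ) else 0) := rfl
    rw [hj, hk]
    by_cases h1 : y j = y i
    · by_cases h2 : y k = y i
      · rw [if_pos h1, if_pos h2]; linarith
      · have hne' : y j ≠ y k := fun h => h2 (h ▸ h1)
        have := hδle j k hne'
        rw [abs_of_nonneg (by linarith)] at this
        rw [if_pos h1, if_neg h2]; linarith
    · by_cases h2 : y k = y i
      · have hne' : y j ≠ y k := fun h => h1 (h.trans h2)
        have := hδle j k hne'
        rw [abs_of_nonneg (by linarith)] at this
        rw [if_neg h1, if_pos h2]; linarith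
      · rw [if_neg h1, if_neg h2]; linarith
  -- distance expansion
  set c : ℝ := ∑ j ∈ B, (x j - y j) with hc
  set m : ℝ := (B.card : ℝ) with hm
  have hmpos : 0 < m := by
    rw [hm]
    exact_mod_cast Finset.card_pos.mpr ⟨i, hiB⟩
  have hkey : ∀ t : ℝ, |t| ≤ δ/2 → 0 ≤ -2 * t * c + t^2 * m := by
    intro t ht
    have h1 := hmin _ (hmem t ht)
    rw [EuclideanSpace.dist_eq, EuclideanSpace.dist_eq] at h1
    simp only [Real.dist_eq, sq_abs] at h1
    have h2 : ∑ j, (x j - y j)^2 ≤ ∑ j, (x j - (y + t • v) j)^2 := by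
      have hnn : 0 ≤ ∑ j, (x j - (y + t • v) j)^2 :=
        Finset.sum_nonneg fun j _ => sq_nonneg _
      calc ∑ j, (x j - y j)^2 = Real.sqrt (∑ j, (x j - y j)^2) ^ 2 := by
              rw [Real.sq_sqrt (Finset.sum_nonneg fun j _ => sq_nonneg _)]
        _ ≤ Real.sqrt (∑ j, (x j - (y + t • v) j)^2) ^ 2 := by
              exact pow_le_pow_left₀ (Real.sqrt_nonneg _) h1 2
        _ = _ := Real.sq_sqrt hnn
    have h3 : ∀ j, (x j - (y + t • v) j)^2
        = (x j - y j)^2 - 2 * t * ((if y j = y i then (1:ℝ) else 0) * (x j - y j))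
          + t^2 * (if y j = y i then (1:ℝ) else 0) := by
      intro j
      have : (y + t • v) j = y j + t * (if y j = y i then (1:ℝ) else 0) := rfl
      rw [this]
      by_cases h : y j = y i <;> simp [h] <;> ring
    simp only [h3, Finset.sum_add_distrib, Finset.sum_sub_distrib,
      ← Finset.mul_sum] at h2
    have e1 : ∑ j, ((if y j = y i then (1:ℝ) else 0) * (x j - y j)) = c := by
      rw [hc, hB, Finset.sum_filter]
      congr 1; ext j; by_cases h : y j = y i <;> simp [h]
    have e2 : ∑ j, (if y j = y i then (1:ℝ) else 0) = m := by
      rw [hm, hB, Finset.card_filter]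
      push_cast
      exact Finset.sum_congr rfl fun j _ => by by_cases h : y j = y i <;> simp [h]
    rw [e1, e2] at h2
    linarith
  have hc0 : c = 0 := by
    by_contra hc0
    have habs : 0 < |c| := abs_pos.mpr hc0
    set t : ℝ := min (δ/2) (|c|/m) with htdef
    have htpos : 0 < t := lt_min (by linarith) (div_pos habs hmpos)
    have ht : |t| ≤ δ/2 := by
      rw [abs_of_pos htpos]; exact min_le_left _ _
    have h1 := hkey t ht
    have h2 := hkey (-t) (by rwa [abs_neg])
    -- |2 t c| ≤ t^2 m
    have h3 : 2 * t * |c| ≤ t^2 * m := by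
      rcases abs_cases c with ⟨h, _⟩ | ⟨h, _⟩
      · rw [h]; nlinarith
      · rw [h]; nlinarith
    have h4 : t ≤ |c| / m := min_le_right _ _
    have h5 : t * m ≤ |c| := (le_div_iff₀ hmpos).mp h4
    nlinarith
  -- conclude rationality
  choose q hq using hx
  refine ⟨(∑ j ∈ B, q j) / (B.card : ℚ), ?_⟩
  have hcard : (B.card : ℚ) ≠ 0 :=
    Nat.cast_ne_zero.mpr (Finset.card_pos.mpr ⟨i, hiB⟩).ne'
  have hsum : ∑ j ∈ B, x j = m * y i := by
    have : ∑ j ∈ B, y j = m * y i := by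
      rw [hm, Finset.sum_congr rfl (fun j hj => by
        simpa [hB] using (Finset.mem_filter.mp hj).2)]
      simp [mul_comm]
    have hcc : ∑ j ∈ B, x j - ∑ j ∈ B, y j = 0 := by
      rw [← Finset.sum_sub_distrib]; exact hc0
    linarith
  have hsum2 : ∑ j ∈ B, x j = ((∑ j ∈ B, q j : ℚ) : ℝ) := by
    push_cast
    exact Finset.sum_congr rfl fun j _ => hq j
  rw [hsum2] at hsum
  push_cast
  field_simp [hm] at hsum ⊢
  rw [eq_div_iff (by exact_mod_cast hcard)]
  push_cast at hsum
  rw [hm] at hsum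
  linarith [hsum]

/-- Proposition 1.1(4) for `GL_n`: `r(ℚⁿ) = ℚⁿ ∩ C`; in particular `r` maps points
with rational coordinates to points with rational coordinates. -/
theorem stmt_4 (n : ℕ) (hn : 1 ≤ n)
    (r : EuclideanSpace ℝ (Fin n) → EuclideanSpace ℝ (Fin n))
    (hr : IsClosestPointMap n r) :
    r '' {x : EuclideanSpace ℝ (Fin n) | ∀ i, ∃ q : ℚ, x i = (q : ℝ)} =
      {x : EuclideanSpace ℝ (Fin n) | ∀ i, ∃ q : ℚ, x i = (q : ℝ)} ∩ domCone n ∧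
    (∀ x : EuclideanSpace ℝ (Fin n),
      (∀ i, ∃ q : ℚ, x i = (q : ℝ)) → ∀ i, ∃ q : ℚ, r x i = (q : ℝ)) := by

  have hrat : ∀ x : EuclideanSpace ℝ (Fin n),
      (∀ i, ∃ q : ℚ, x i = (q : ℝ)) → ∀ i, ∃ q : ℚ, r x i = (q : ℝ) :=
    fun x hx => key n x (r x) (hr x).1 (hr x).2 hx
  refine ⟨Set.Subset.antisymm ?_ ?_, hrat⟩
  · rintro _ ⟨x, hx, rfl⟩
    exact ⟨hrat x hx, (hr x).1⟩
  · rintro z ⟨hz, hzC⟩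
    have h0 : dist z (r z) ≤ dist z z := (hr z).2 z hzC
    rw [dist_self] at h0
    have : r z = z := by
      have := le_antisymm h0 dist_nonneg
      exact (dist_eq_zero.mp this).symm
    exact ⟨z, hz, this⟩
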